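/- For k ∈ {1,…,d}, the dual of the (k,∞)-support norm is ‖u‖_{*,(k,∞)} = Σ_{i=1}^k |u|↓_i (the Ky Fan-type norm summing the k largest absolute values), and the (k,∞)-support norm itself equals ‖w‖_{(k,∞)} = max(‖w‖_∞, ‖w‖_1/k). -/

import Mathlib

/-- The (k,∞)-support norm, defined by infimal convolution of ℓ∞ norms over
supports of cardinality at most k. -/
noncomputable def ksupInftyNorm (d k : ℕ) (w : Fin d → ℝ) : ℝ :=
  sInf {x : ℝ | ∃ v : Finset (Fin d) → (Fin d → ℝ),
    (∀ g : Finset (Fin d), ∀ i, i ∉ g → v g i = 0) ∧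
    (∑ g ∈ Finset.univ.filter (fun g : Finset (Fin d) => g.card ≤ k), v g) = w ∧
    x = ∑ g ∈ Finset.univ.filter (fun g : Finset (Fin d) => g.card ≤ k), ⨆ i, |v g i|}

lemma exists_topset {d : ℕ} (w : Fin d → ℝ) :
    ∀ m, m ≤ d → ∃ S : Finset (Fin d), S.card = m ∧ ∀ i ∈ S, ∀ j ∉ S, w j ≤ w i := by
  intro m
  induction m with
  | zero => exact fun _ => ⟨∅, rfl, by simp⟩
  | succ m ih =>
    intro hm
    obtain ⟨S, hScard, hSsep⟩ := ih (Nat.le_of_succ_le hm)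
    have hSc : Sᶜ.Nonempty := by
      rw [← Finset.card_pos, Finset.card_compl, hScard]
      simp only [Fintype.card_fin]
      omega
    obtain ⟨j0, hj0, hj0max⟩ := Finset.exists_max_image Sᶜ w hSc
    have hj0S : j0 ∉ S := Finset.mem_compl.mp hj0
    refine ⟨insert j0 S, ?_, ?_⟩
    · rw [Finset.card_insert_of_notMem hj0S, hScard]
    · intro i hi j hj
      have hjS : j ∉ S := fun h => hj (Finset.mem_insert_of_mem h)
      rcases Finset.mem_insert.mp hi with rfl | hiS
      · exact hj0max j (Finset.mem_compl.mpr hjS)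
      · exact hSsep i hiS j hjS

lemma ksup_decomp {d k : ℕ} (hk1 : 1 ≤ k) (hkd : k ≤ d) :
    ∀ n : ℕ, ∀ (t : ℝ) (w : Fin d → ℝ),
      (∀ i, 0 ≤ w i) → (∀ i, w i ≤ t) → (∑ i, w i) ≤ k * t →
      ((Finset.univ.filter (fun i => 0 < w i)).card
        + (Finset.univ.filter (fun i => w i < t)).card) ≤ n →
      ∃ v : Finset (Fin d) → (Fin d → ℝ),
        (∀ g i, 0 ≤ v g i) ∧
        (∀ g : Finset (Fin d), ∀ i, i ∉ g → v g i = 0) ∧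
        (∑ g ∈ Finset.univ.filter (fun g : Finset (Fin d) => g.card ≤ k), v g) = w ∧
        (∑ g ∈ Finset.univ.filter (fun g : Finset (Fin d) => g.card ≤ k), ⨆ i, v g i) ≤ t := by
  haveI : Nonempty (Fin d) := ⟨⟨0, by omega⟩⟩
  intro n
  induction n using Nat.strong_induction_on with
  | _ n ih =>
  intro t w hw0 hwt hws hmu
  by_cases hcard : (Finset.univ.filter fun i => 0 < w i).card ≤ k
  · -- base case: support of w has at most k elements
    set S0 := Finset.univ.filter (fun i => 0 < w i) with hS0
    have hS0mem : S0 ∈ Finset.univ.filter (fun g : Finset (Fin d) => g.card ≤ k) := by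
      simp only [Finset.mem_filter, Finset.mem_univ, true_and]; exact hcard
    refine ⟨fun g => if g = S0 then w else 0, ?_, ?_, ?_, ?_⟩
    · intro g i; by_cases h : g = S0 <;> simp [h, hw0 i]
    · intro g i hig
      by_cases h : g = S0
      · subst h
        have hnot : ¬ 0 < w i := by simpa [hS0] using hig
        have h3 : w i = 0 := le_antisymm (not_lt.mp hnot) (hw0 i)
        simp [h3]
      · simp [h]
    · rw [Finset.sum_ite_eq' _ S0 (fun _ => w), if_pos hS0mem]
    · have hrw : ∀ g ∈ Finset.univ.filter (fun g : Finset (Fin d) => g.card ≤ k),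
          (⨆ i, (if g = S0 then w else 0) i) = (if g = S0 then (⨆ i, w i) else 0) := by
        intro g _
        by_cases h : g = S0 <;> simp [h, ciSup_const]
      rw [Finset.sum_congr rfl hrw, Finset.sum_ite_eq' _ S0 (fun _ => ⨆ i, w i), if_pos hS0mem]
      exact ciSup_le hwt
  · -- inductive step
    push_neg at hcard
    -- basic positivity facts
    obtain ⟨i1, hi1⟩ : ∃ i, 0 < w i := by
      by_contra h
      push_neg at h
      have : (Finset.univ.filter fun i => 0 < w i) = ∅ := by
        refine Finset.filter_eq_empty_iff.mpr fun {i} _ => not_lt.mpr (h i)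
      rw [this] at hcard; simp at hcard
    have ht0 : 0 < t := lt_of_lt_of_le hi1 (hwt i1)
    obtain ⟨S, hScard, hSsep⟩ := exists_topset w k hkd
    have hSne : S.Nonempty := Finset.card_pos.mp (by omega)
    have hScne : Sᶜ.Nonempty := by
      rw [← Finset.card_pos, Finset.card_compl, hScard]
      simp only [Fintype.card_fin]
      have : (Finset.univ.filter fun i => 0 < w i).card ≤ d := by
        simpa using Finset.card_le_univ (Finset.univ.filter fun i => 0 < w i)
      omega
    set M := Sᶜ.sup' hScne w with hM
    obtain ⟨j0, hj0, hj0eq⟩ := Finset.exists_mem_eq_sup' hScne w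
    have hj0S : j0 ∉ S := Finset.mem_compl.mp hj0
    have hj0M : w j0 = M := hj0eq.symm
    have hMub : ∀ j ∉ S, w j ≤ M := fun j hj => Finset.le_sup' w (Finset.mem_compl.mpr hj)
    have hMleS : ∀ i ∈ S, M ≤ w i := by
      intro i hi; rw [← hj0M]; exact hSsep i hi j0 hj0S
    -- M > 0 : some positive coordinate outside S
    have hMpos : 0 < M := by
      have hssub : ¬ (Finset.univ.filter fun i => 0 < w i) ⊆ S := by
        intro hsub
        have := Finset.card_le_card hsub
        omega
      obtain ⟨i2, hi2mem, hi2S⟩ := Finset.not_subset.mp hssub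
      have : 0 < w i2 := (Finset.mem_filter.mp hi2mem).2
      exact lt_of_lt_of_le this (hMub i2 hi2S)
    -- M < t
    have hMlt : M < t := by
      rcases lt_or_eq_of_le (hwt j0) with h | h
      · rw [← hj0M]; exact h
      · exfalso
        have hsum1 : ∑ i ∈ insert j0 S, w i ≤ ∑ i, w i :=
          Finset.sum_le_sum_of_subset_of_nonneg (Finset.subset_univ _) fun i _ _ => hw0 i
        have hsum2 : (k:ℝ) * M ≤ ∑ i ∈ S, w i := by
          have := Finset.card_nsmul_le_sum S w M fun i hi => hMleS i hi
          rw [hScard] at this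
          simpa [nsmul_eq_mul] using this
        rw [Finset.sum_insert hj0S] at hsum1
        have hMt : M = t := by rw [← hj0M]; exact h
        nlinarith
    set mS := S.inf' hSne w with hmS
    have hmSpos : 0 < mS := by
      obtain ⟨i3, hi3, hi3eq⟩ := Finset.exists_mem_eq_inf' hSne w
      rw [hmS, hi3eq]
      exact lt_of_lt_of_le hMpos (hMleS i3 hi3)
    set c := min mS (t - M) with hc
    have hc0 : 0 < c := lt_min hmSpos (by linarith)
    have hcmS : c ≤ mS := min_le_left _ _
    have hctM : c ≤ t - M := min_le_right _ _
    set w' := fun i => w i - (if i ∈ S then c else 0) with hw'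
    set t' := t - c with ht'
    -- invariants for w'
    have hw'0 : ∀ i, 0 ≤ w' i := by
      intro i; by_cases h : i ∈ S <;> simp only [hw', h, if_pos, if_neg, if_true, if_false]
      · have := S.inf'_le w h; simp only [← hmS] at this; linarith
      · simpa using hw0 i
    have hw't : ∀ i, w' i ≤ t' := by
      intro i; by_cases h : i ∈ S <;> simp only [hw', ht', h, if_true, if_false]
      · linarith [hwt i]
      · have := hMub i h; simp; linarith
    have hw's : (∑ i, w' i) ≤ k * t' := by
      have : ∑ i, w' i = (∑ i, w i) - (k:ℝ) * c := by
        simp only [hw']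
        rw [Finset.sum_sub_distrib]
        congr 1
        rw [Finset.sum_ite_mem, Finset.univ_inter, Finset.sum_const, hScard, nsmul_eq_mul]
      rw [this]
      have hkt : (k:ℝ) * t' = k * t - k * c := by rw [ht']; ring
      linarith
    -- measure decrease
    have hsub1 : (Finset.univ.filter fun i => 0 < w' i) ⊆ (Finset.univ.filter fun i => 0 < w i) := by
      intro i hi
      simp only [Finset.mem_filter, Finset.mem_univ, true_and] at hi ⊢
      by_cases h : i ∈ S
      · simp only [hw', h, if_true] at hi; linarith
      · simpa [hw', h] using hi
    have hsub2 : (Finset.univ.filter fun i => w' i < t') ⊆ (Finset.univ.filter fun i => w i < t) := by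
      intro i hi
      simp only [Finset.mem_filter, Finset.mem_univ, true_and] at hi ⊢
      by_cases h : i ∈ S
      · simp only [hw', ht', h, if_true] at hi; linarith
      · have := hMub i h; linarith
    have hmu' : (Finset.univ.filter fun i => 0 < w' i).card
        + (Finset.univ.filter fun i => w' i < t').card < n := by
      rcases le_or_gt mS (t - M) with hcase | hcase
      · -- c = mS : a coordinate of S dies
        obtain ⟨i3, hi3, hi3eq⟩ := Finset.exists_mem_eq_inf' hSne w
        have hcval : c = mS := min_eq_left hcase
        have : i3 ∉ (Finset.univ.filter fun i => 0 < w' i) := by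
          simp only [Finset.mem_filter, Finset.mem_univ, true_and, not_lt]
          simp only [hw', hi3, if_true]
          rw [hcval, hmS, ← hi3eq]
          simp
        have h1 : (Finset.univ.filter fun i => 0 < w' i).card
            < (Finset.univ.filter fun i => 0 < w i).card := by
          refine Finset.card_lt_card ⟨hsub1, fun hcon => this (hcon ?_)⟩
          simp only [Finset.mem_filter, Finset.mem_univ, true_and]
          exact lt_of_lt_of_le hMpos (hMleS i3 hi3)
        have h2 := Finset.card_le_card hsub2
        omega
      · -- c = t - M : coordinate j0 reaches the cap
        have hcval : c = t - M := min_eq_right (le_of_lt hcase)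
        have : j0 ∉ (Finset.univ.filter fun i => w' i < t') := by
          simp only [Finset.mem_filter, Finset.mem_univ, true_and, not_lt]
          simp only [hw', ht', hj0S, if_false]
          simp only [sub_zero]
          linarith [hj0M, hcval]
        have h2 : (Finset.univ.filter fun i => w' i < t').card
            < (Finset.univ.filter fun i => w i < t).card := by
          refine Finset.card_lt_card ⟨hsub2, fun hcon => this (hcon ?_)⟩
          simp only [Finset.mem_filter, Finset.mem_univ, true_and]
          linarith [hj0M, hMlt]
        have h1 := Finset.card_le_card hsub1
        omega
    -- apply induction hypothesis
    obtain ⟨v', hv'0, hv'supp, hv'sum, hv'cost⟩ :=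
      ih _ hmu' t' w' hw'0 hw't hw's le_rfl
    have hSmem : S ∈ Finset.univ.filter (fun g : Finset (Fin d) => g.card ≤ k) := by
      simp only [Finset.mem_filter, Finset.mem_univ, true_and]; omega
    refine ⟨fun g i => v' g i + (if g = S ∧ i ∈ S then c else 0), ?_, ?_, ?_, ?_⟩
    · intro g i
      dsimp only
      have h0 := hv'0 g i
      have hind : (0:ℝ) ≤ (if g = S ∧ i ∈ S then c else 0) := by
        by_cases h : g = S ∧ i ∈ S <;> simp [h]
        linarith
      linarith
    · intro g i hig
      have h1 := hv'supp g i hig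
      have h2 : ¬ (g = S ∧ i ∈ S) := by rintro ⟨rfl, h⟩; exact hig h
      simp [h1, h2]
    · funext i
      rw [Finset.sum_apply]
      have : ∀ g, v' g i + (if g = S ∧ i ∈ S then c else 0)
          = v' g i + (if g = S then (if i ∈ S then c else 0) else 0) := by
        intro g; by_cases h1 : g = S <;> by_cases h2 : i ∈ S <;> simp [h1, h2]
      simp only [this]
      rw [Finset.sum_add_distrib, Finset.sum_ite_eq' _ S
        (fun _ => (if i ∈ S then c else 0)), if_pos hSmem]
      have := congrFun hv'sum i
      rw [Finset.sum_apply] at this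
      rw [this]
      simp only [hw']
      ring
    · have key : ∀ g ∈ Finset.univ.filter (fun g : Finset (Fin d) => g.card ≤ k),
          (⨆ i, (v' g i + (if g = S ∧ i ∈ S then c else 0)))
            ≤ (⨆ i, v' g i) + (if g = S then c else 0) := by
        intro g _
        refine ciSup_le fun i => ?_
        have h1 : v' g i ≤ ⨆ j, v' g j := le_ciSup (Finite.bddAbove_range fun j => v' g j) i
        by_cases h : g = S
        · have hind : (if g = S ∧ i ∈ S then c else 0) ≤ c := by
            by_cases h2 : i ∈ S <;> simp [h, h2]
            linarith
          rw [if_pos h]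
          linarith
        · have hind : (if g = S ∧ i ∈ S then c else 0) = 0 := by simp [h]
          rw [if_neg h, hind]
          linarith
      dsimp only
      calc ∑ g ∈ Finset.univ.filter (fun g : Finset (Fin d) => g.card ≤ k),
            ⨆ i, (v' g i + (if g = S ∧ i ∈ S then c else 0))
          ≤ ∑ g ∈ Finset.univ.filter (fun g : Finset (Fin d) => g.card ≤ k),
            ((⨆ i, v' g i) + (if g = S then c else 0)) := Finset.sum_le_sum key
        _ = (∑ g ∈ Finset.univ.filter (fun g : Finset (Fin d) => g.card ≤ k), ⨆ i, v' g i)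
            + c := by
            rw [Finset.sum_add_distrib, Finset.sum_ite_eq' _ S (fun _ => c), if_pos hSmem]
        _ ≤ t' + c := by linarith
        _ = t := by rw [ht']; ring

lemma ksup_lower {d k : ℕ} (hk1 : 1 ≤ k) (hkd : k ≤ d) (w : Fin d → ℝ)
    (v : Finset (Fin d) → Fin d → ℝ)
    (hsupp : ∀ g : Finset (Fin d), ∀ i, i ∉ g → v g i = 0)
    (hsum : (∑ g ∈ Finset.univ.filter (fun g : Finset (Fin d) => g.card ≤ k), v g) = w) :
    max (⨆ i, |w i|) ((∑ i, |w i|) / k) ≤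
      ∑ g ∈ Finset.univ.filter (fun g : Finset (Fin d) => g.card ≤ k), ⨆ i, |v g i| := by
  haveI : Nonempty (Fin d) := ⟨⟨0, by omega⟩⟩
  set F := Finset.univ.filter (fun g : Finset (Fin d) => g.card ≤ k) with hF
  have hle : ∀ g i, |v g i| ≤ ⨆ j, |v g j| := fun g i =>
    le_ciSup (Finite.bddAbove_range fun j => |v g j|) i
  have hsupnn : ∀ g, (0:ℝ) ≤ ⨆ j, |v g j| := fun g =>
    le_trans (abs_nonneg _) (hle g (Classical.arbitrary _))
  have hpt : ∀ i, |w i| ≤ ∑ g ∈ F, ⨆ j, |v g j| := by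
    intro i
    have h1 : w i = ∑ g ∈ F, v g i := by rw [← hsum, Finset.sum_apply]
    calc |w i| ≤ ∑ g ∈ F, |v g i| := by rw [h1]; exact Finset.abs_sum_le_sum_abs _ _
    _ ≤ ∑ g ∈ F, ⨆ j, |v g j| := Finset.sum_le_sum fun g _ => hle g _
  refine max_le (ciSup_le hpt) ?_
  rw [div_le_iff₀ (by positivity : (0:ℝ) < (k:ℕ))]
  have hone : ∀ g ∈ F, ∑ i, |v g i| ≤ (k:ℝ) * (⨆ j, |v g j|) := by
    intro g hg
    have hsub : ∑ i, |v g i| = ∑ i ∈ g, |v g i| := by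
      refine (Finset.sum_subset (Finset.subset_univ g) ?_).symm
      intro i _ hig; rw [hsupp g i hig]; simp
    have hcard : (g.card : ℝ) ≤ (k : ℝ) := by
      exact_mod_cast (Finset.mem_filter.mp hg).2
    calc ∑ i, |v g i| = ∑ i ∈ g, |v g i| := hsub
    _ ≤ g.card • (⨆ j, |v g j|) := Finset.sum_le_card_nsmul _ _ _ fun i _ => hle g i
    _ = (g.card : ℝ) * (⨆ j, |v g j|) := nsmul_eq_mul _ _
    _ ≤ (k:ℝ) * (⨆ j, |v g j|) := mul_le_mul_of_nonneg_right hcard (hsupnn g)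
  calc ∑ i, |w i| ≤ ∑ i, ∑ g ∈ F, |v g i| := by
        refine Finset.sum_le_sum fun i _ => ?_
        have h1 : w i = ∑ g ∈ F, v g i := by rw [← hsum, Finset.sum_apply]
        rw [h1]; exact Finset.abs_sum_le_sum_abs _ _
  _ = ∑ g ∈ F, ∑ i, |v g i| := Finset.sum_comm
  _ ≤ ∑ g ∈ F, (k:ℝ) * (⨆ j, |v g j|) := Finset.sum_le_sum hone
  _ = (∑ g ∈ F, ⨆ j, |v g j|) * k := by rw [← Finset.mul_sum, mul_comm]

lemma ksup_value {d k : ℕ} (hk1 : 1 ≤ k) (hkd : k ≤ d) (w : Fin d → ℝ) :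
    ksupInftyNorm d k w = max (⨆ i, |w i|) ((∑ i, |w i|) / k) := by
  haveI : Nonempty (Fin d) := ⟨⟨0, by omega⟩⟩
  set t := max (⨆ i, |w i|) ((∑ i, |w i|) / k) with htdef
  have hk0 : (0:ℝ) < (k:ℕ) := by positivity
  have habs_t : ∀ i, |w i| ≤ t := fun i =>
    le_trans (le_ciSup (Finite.bddAbove_range fun j => |w j|) i) (le_max_left _ _)
  have hsum_t : (∑ i, |w i|) ≤ k * t := by
    have := le_max_right (⨆ i, |w i|) ((∑ i, |w i|) / k)
    rw [div_le_iff₀ hk0] at this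
    calc (∑ i, |w i|) ≤ t * k := this
    _ = k * t := mul_comm _ _
  obtain ⟨v', hv'0, hv'supp, hv'sum, hv'cost⟩ :=
    ksup_decomp hk1 hkd (2 * d) t (fun i => |w i|) (fun i => abs_nonneg _) habs_t hsum_t
      (by
        have h1 : (Finset.univ.filter fun i : Fin d => 0 < |w i|).card ≤ d := by
          simpa using Finset.card_le_univ (Finset.univ.filter fun i : Fin d => 0 < |w i|)
        have h2 : (Finset.univ.filter fun i : Fin d => |w i| < t).card ≤ d := by
          simpa using Finset.card_le_univ (Finset.univ.filter fun i : Fin d => |w i| < t)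
        omega)
  set s : Fin d → ℝ := fun i => if w i < 0 then -1 else 1 with hs
  have hsabs : ∀ i, |s i| = 1 := by
    intro i; by_cases h : w i < 0 <;> simp [hs, h]
  have hsw : ∀ i, s i * |w i| = w i := by
    intro i
    by_cases h : w i < 0
    · simp [hs, h, abs_of_neg h]
    · simp [hs, h, abs_of_nonneg (not_lt.mp h)]
  set v : Finset (Fin d) → Fin d → ℝ := fun g i => s i * v' g i with hv
  have hvabs : ∀ g i, |v g i| = v' g i := by
    intro g i
    rw [hv]
    dsimp only
    rw [abs_mul, hsabs, one_mul, abs_of_nonneg (hv'0 g i)]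
  have hvsupp : ∀ g : Finset (Fin d), ∀ i, i ∉ g → v g i = 0 := by
    intro g i hig; simp [hv, hv'supp g i hig]
  have hvsum : (∑ g ∈ Finset.univ.filter (fun g : Finset (Fin d) => g.card ≤ k), v g) = w := by
    funext i
    rw [Finset.sum_apply]
    have : ∀ g, v g i = s i * v' g i := fun g => rfl
    simp only [this]
    rw [← Finset.mul_sum]
    have := congrFun hv'sum i
    rw [Finset.sum_apply] at this
    rw [this]
    exact hsw i
  set x := ∑ g ∈ Finset.univ.filter (fun g : Finset (Fin d) => g.card ≤ k), ⨆ i, |v g i|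
    with hx
  have hxmem : x ∈ {x : ℝ | ∃ v : Finset (Fin d) → (Fin d → ℝ),
      (∀ g : Finset (Fin d), ∀ i, i ∉ g → v g i = 0) ∧
      (∑ g ∈ Finset.univ.filter (fun g : Finset (Fin d) => g.card ≤ k), v g) = w ∧
      x = ∑ g ∈ Finset.univ.filter (fun g : Finset (Fin d) => g.card ≤ k), ⨆ i, |v g i|} :=
    ⟨v, hvsupp, hvsum, rfl⟩
  have hxle : x ≤ t := by
    have : ∀ g, (⨆ i, |v g i|) = ⨆ i, v' g i := by
      intro g; congr 1; funext i; exact hvabs g i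
    rw [hx]
    calc ∑ g ∈ Finset.univ.filter (fun g : Finset (Fin d) => g.card ≤ k), ⨆ i, |v g i|
        = ∑ g ∈ Finset.univ.filter (fun g : Finset (Fin d) => g.card ≤ k), ⨆ i, v' g i := by
          exact Finset.sum_congr rfl fun g _ => this g
    _ ≤ t := hv'cost
  have hlb : ∀ y ∈ {x : ℝ | ∃ v : Finset (Fin d) → (Fin d → ℝ),
      (∀ g : Finset (Fin d), ∀ i, i ∉ g → v g i = 0) ∧
      (∑ g ∈ Finset.univ.filter (fun g : Finset (Fin d) => g.card ≤ k), v g) = w ∧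
      x = ∑ g ∈ Finset.univ.filter (fun g : Finset (Fin d) => g.card ≤ k), ⨆ i, |v g i|},
      t ≤ y := by
    rintro y ⟨v'', hsupp'', hsum'', rfl⟩
    exact ksup_lower hk1 hkd w v'' hsupp'' hsum''
  refine le_antisymm ?_ ?_
  · exact le_trans (csInf_le ⟨t, hlb⟩ hxmem) hxle
  · exact le_csInf ⟨x, hxmem⟩ hlb

lemma dual_core (hk1 : 1 ≤ k) (hkd : k ≤ d) (a b : Fin d → ℝ)
    (ha : Antitone a) (ha0 : ∀ i, 0 ≤ a i)
    (hb0 : ∀ i, 0 ≤ b i) (hb1 : ∀ i, b i ≤ 1) (hbs : (∑ i, b i) ≤ k)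
    (P : Finset (Fin d)) (hP : P = Finset.univ.filter (fun i : Fin d => (i:ℕ) < k))
    (hPcard : P.card = k) :
    (∑ i, a i * b i) ≤ ∑ i ∈ P, a i := by
  haveI : Nonempty (Fin d) := ⟨⟨0, by omega⟩⟩
  set K : Fin d := ⟨k - 1, by omega⟩ with hK
  have haK0 : 0 ≤ a K := ha0 K
  have haKle : ∀ i ∈ P, a K ≤ a i := by
    intro i hi
    refine ha ?_
    rw [hP] at hi
    simp only [Finset.mem_filter, Finset.mem_univ, true_and] at hi
    rw [Fin.le_def]
    simp only [hK]
    omega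
  have haKge : ∀ i ∉ P, a i ≤ a K := by
    intro i hi
    refine ha ?_
    rw [hP] at hi
    simp only [Finset.mem_filter, Finset.mem_univ, true_and, not_lt] at hi
    rw [Fin.le_def]
    simp only [hK]
    omega
  have h1 : (∑ i ∈ P, a i * b i) + a K * ((k:ℝ) - ∑ i ∈ P, b i) ≤ ∑ i ∈ P, a i := by
    have hterm : ∀ i ∈ P, a i * b i + a K * (1 - b i) ≤ a i := by
      intro i hi
      nlinarith [mul_nonneg (sub_nonneg.mpr (haKle i hi)) (sub_nonneg.mpr (hb1 i))]
    have := Finset.sum_le_sum hterm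
    rw [Finset.sum_add_distrib, ← Finset.mul_sum, Finset.sum_sub_distrib,
      Finset.sum_const, hPcard, nsmul_eq_mul, mul_one] at this
    exact this
  have h2 : (∑ i ∈ Pᶜ, a i * b i) ≤ a K * ∑ i ∈ Pᶜ, b i := by
    rw [Finset.mul_sum]
    refine Finset.sum_le_sum fun i hi => ?_
    exact mul_le_mul_of_nonneg_right (haKge i (Finset.mem_compl.mp hi)) (hb0 i)
  have hsplit : (∑ i, a i * b i) = (∑ i ∈ P, a i * b i) + ∑ i ∈ Pᶜ, a i * b i :=
    (Finset.sum_add_sum_compl P _).symm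
  have hbsplit : (∑ i ∈ P, b i) + (∑ i ∈ Pᶜ, b i) = ∑ i, b i :=
    Finset.sum_add_sum_compl P _
  nlinarith [h1, h2, hsplit, hbsplit, haK0, hbs]

lemma ksup_part1 {d k : ℕ} (hk1 : 1 ≤ k) (hkd : k ≤ d)
    (u : Fin d → ℝ) (σ : Equiv.Perm (Fin d))
    (hmono : Antitone fun i => |u (σ i)|) :
    sSup {x : ℝ | ∃ w : Fin d → ℝ, ksupInftyNorm d k w ≤ 1 ∧ x = ∑ i, u i * w i} =
      ∑ i ∈ Finset.range k, (if h : i < d then |u (σ ⟨i, h⟩)| else 0) := by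
  haveI : Nonempty (Fin d) := ⟨⟨0, by omega⟩⟩
  have hk0 : (0:ℝ) < (k:ℕ) := by positivity
  set a : Fin d → ℝ := fun i => |u (σ i)| with hadef
  set P : Finset (Fin d) := Finset.univ.filter (fun i : Fin d => (i:ℕ) < k) with hP
  have hPmap : Finset.univ.map (Fin.castLEEmb hkd) = P := by
    ext i
    simp only [Finset.mem_map, Finset.mem_univ, true_and, hP, Finset.mem_filter]
    constructor
    · rintro ⟨j, rfl⟩
      simpa using j.2
    · intro h
      exact ⟨⟨(i:ℕ), h⟩, by ext; simp⟩
  have hPcard : P.card = k := by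
    rw [← hPmap, Finset.card_map, Finset.card_univ, Fintype.card_fin]
  -- RHS equals ∑ i ∈ P, a i
  have hT : (∑ i ∈ Finset.range k, (if h : i < d then |u (σ ⟨i, h⟩)| else 0))
      = ∑ i ∈ P, a i := by
    rw [← hPmap, Finset.sum_map]
    rw [← Fin.sum_univ_eq_sum_range (fun i => if h : i < d then |u (σ ⟨i, h⟩)| else 0) k]
    refine Finset.sum_congr rfl fun j _ => ?_
    have hj : (j : ℕ) < d := lt_of_lt_of_le j.2 hkd
    rw [dif_pos hj]
    rfl
  rw [hT]
  -- upper bound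
  have hub : ∀ x ∈ {x : ℝ | ∃ w : Fin d → ℝ, ksupInftyNorm d k w ≤ 1 ∧ x = ∑ i, u i * w i},
      x ≤ ∑ i ∈ P, a i := by
    rintro x ⟨w, hnorm, rfl⟩
    rw [ksup_value hk1 hkd w] at hnorm
    have hwinf : ∀ i, |w i| ≤ 1 := fun i =>
      le_trans (le_trans (le_ciSup (Finite.bddAbove_range fun j => |w j|) i)
        (le_max_left _ _)) hnorm
    have hw1 : (∑ i, |w i|) ≤ (k:ℝ) := by
      have h := le_trans (le_max_right (⨆ i, |w i|) ((∑ i, |w i|) / k)) hnorm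
      rw [div_le_one hk0] at h
      exact h
    set b : Fin d → ℝ := fun i => |w (σ i)| with hb
    have hbs : (∑ i, b i) ≤ (k:ℝ) := by
      rw [hb]
      calc (∑ i, |w (σ i)|) = ∑ i, |w i| := Equiv.sum_comp σ fun i => |w i|
      _ ≤ (k:ℝ) := hw1
    have step1 : (∑ i, u i * w i) = ∑ i, u (σ i) * w (σ i) :=
      (Equiv.sum_comp σ fun i => u i * w i).symm
    have step2 : (∑ i, u (σ i) * w (σ i)) ≤ ∑ i, a i * b i := by
      refine Finset.sum_le_sum fun i _ => ?_
      calc u (σ i) * w (σ i) ≤ |u (σ i) * w (σ i)| := le_abs_self _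
      _ = a i * b i := by rw [abs_mul]
    calc (∑ i, u i * w i) = ∑ i, u (σ i) * w (σ i) := step1
    _ ≤ ∑ i, a i * b i := step2
    _ ≤ ∑ i ∈ P, a i := dual_core hk1 hkd a b hmono (fun i => abs_nonneg _)
        (fun i => abs_nonneg _) (fun i => hwinf (σ i)) hbs P hP hPcard
  -- the maximizer
  set w0 : Fin d → ℝ := fun i =>
    if ((σ.symm i : Fin d) : ℕ) < k then (if u i < 0 then -1 else 1) else 0 with hw0
  have hw0abs : ∀ i, |w0 i| = if ((σ.symm i : Fin d) : ℕ) < k then 1 else 0 := by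
    intro i
    by_cases h1 : ((σ.symm i : Fin d) : ℕ) < k <;> by_cases h2 : u i < 0 <;>
      simp [hw0, h1, h2]
  have hw0sum : (∑ i, |w0 i|) = (k:ℝ) := by
    have : ∀ i, |w0 i| = (fun j => if ((σ.symm j : Fin d) : ℕ) < k then (1:ℝ) else 0) i :=
      hw0abs
    rw [Finset.sum_congr rfl fun i _ => this i]
    rw [← Equiv.sum_comp σ (fun j => if ((σ.symm j : Fin d) : ℕ) < k then (1:ℝ) else 0)]
    simp only [Equiv.symm_apply_apply]
    rw [← Finset.sum_filter, ← hP, Finset.sum_const, hPcard, nsmul_eq_mul, mul_one]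
  have hw0norm : ksupInftyNorm d k w0 ≤ 1 := by
    rw [ksup_value hk1 hkd w0]
    refine max_le ?_ ?_
    · refine ciSup_le fun i => ?_
      rw [hw0abs i]
      by_cases h : ((σ.symm i : Fin d) : ℕ) < k <;> simp [h]
    · rw [hw0sum, div_self (ne_of_gt hk0)]
  have hw0val : (∑ i, u i * w0 i) = ∑ i ∈ P, a i := by
    have hpt : ∀ i, u i * w0 i
        = (fun j => if ((σ.symm j : Fin d) : ℕ) < k then |u j| else 0) i := by
      intro i
      dsimp only
      by_cases h1 : ((σ.symm i : Fin d) : ℕ) < k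
      · rw [hw0]
        dsimp only
        rw [if_pos h1, if_pos h1]
        by_cases h2 : u i < 0
        · rw [if_pos h2, abs_of_neg h2]; ring
        · rw [if_neg h2, abs_of_nonneg (not_lt.mp h2)]; ring
      · rw [hw0]
        dsimp only
        rw [if_neg h1, if_neg h1, mul_zero]
    rw [Finset.sum_congr rfl fun i _ => hpt i]
    rw [← Equiv.sum_comp σ (fun j => if ((σ.symm j : Fin d) : ℕ) < k then |u j| else 0)]
    simp only [Equiv.symm_apply_apply]
    rw [← Finset.sum_filter, ← hP]
  have hmem : (∑ i ∈ P, a i) ∈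
      {x : ℝ | ∃ w : Fin d → ℝ, ksupInftyNorm d k w ≤ 1 ∧ x = ∑ i, u i * w i} :=
    ⟨w0, hw0norm, hw0val.symm⟩
  exact le_antisymm (csSup_le ⟨_, hmem⟩ hub) (le_csSup ⟨_, hub⟩ hmem)

theorem ksup_infty_dual_and_value {d k : ℕ} (hk1 : 1 ≤ k) (hkd : k ≤ d) :
    (∀ (u : Fin d → ℝ) (σ : Equiv.Perm (Fin d)),
      (Antitone fun i => |u (σ i)|) →
      sSup {x : ℝ | ∃ w : Fin d → ℝ, ksupInftyNorm d k w ≤ 1 ∧ x = ∑ i, u i * w i} =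
        ∑ i ∈ Finset.range k, (if h : i < d then |u (σ ⟨i, h⟩)| else 0)) ∧
    (∀ w : Fin d → ℝ,
      ksupInftyNorm d k w = max (⨆ i, |w i|) ((∑ i, |w i|) / k)) := by
  exact ⟨fun u σ h => ksup_part1 hk1 hkd u σ h, fun w => ksup_value hk1 hkd w⟩
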